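/- Let U ⊆ ℝ^N be an open convex set and D : U → ℝ^N a continuously differentiable map whose Jacobian satisfies ‖J_D(x) − J_D(y)‖_op ≤ L_D ‖x − y‖₂ for all x, y ∈ U. Let p, q ∈ U be such that the reflected point p̃ = 2q − p also lies in U. Then ‖ (D(p) + D(p̃))/2 − D(q) ‖₂ ≤ L_D ‖p − q‖₂². -/

import Mathlib

open scoped RealInnerProductSpace

lemma taylor_aux {N : ℕ}
    (U : Set (EuclideanSpace ℝ (Fin N))) (hU : IsOpen U) (hUconv : Convex ℝ U)
    (D : EuclideanSpace ℝ (Fin N) → EuclideanSpace ℝ (Fin N))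
    (hD : ContDiffOn ℝ 1 D U)
    (LD : ℝ)
    (hLD : ∀ x ∈ U, ∀ y ∈ U, ‖fderiv ℝ D x - fderiv ℝ D y‖ ≤ LD * ‖x - y‖)
    (a b : EuclideanSpace ℝ (Fin N)) (ha : a ∈ U) (hb : b ∈ U) :
    ‖D b - D a - fderiv ℝ D a (b - a)‖ ≤ LD * ‖b - a‖ ^ 2 := by
  by_cases hab : a = b
  · simp [hab]
  have hLD0 : 0 ≤ LD := by
    have h := hLD a ha b hb
    have hpos : 0 < ‖a - b‖ := by
      rw [norm_pos_iff, sub_ne_zero]; exact hab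
    nlinarith [norm_nonneg (fderiv ℝ D a - fderiv ℝ D b)]
  have hdiff : ∀ x ∈ U, HasFDerivAt D (fderiv ℝ D x) x := by
    intro x hx
    exact ((hD.contDiffAt (hU.mem_nhds hx)).differentiableAt one_ne_zero).hasFDerivAt
  set f : EuclideanSpace ℝ (Fin N) → EuclideanSpace ℝ (Fin N) :=
    fun x => D x - fderiv ℝ D a x with hf
  have hseg : segment ℝ a b ⊆ U := hUconv.segment_subset ha hb
  have key : ‖f b - f a‖ ≤ (LD * ‖b - a‖) * ‖b - a‖ := by
    apply (convex_segment a b).norm_image_sub_le_of_norm_hasFDerivWithin_le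
      (f' := fun x => fderiv ℝ D x - fderiv ℝ D a)
      (fun x hx => ((hdiff x (hseg hx)).sub
        (fderiv ℝ D a).hasFDerivAt).hasFDerivWithinAt)
      (fun x hx => ?_) (left_mem_segment ℝ a b) (right_mem_segment ℝ a b)
    have h1 := hLD x (hseg hx) a ha
    have h2 : ‖x - a‖ ≤ ‖b - a‖ := by
      have h3 := dist_add_dist_of_mem_segment hx
      have h4 : dist a x ≤ dist a b := by linarith [dist_nonneg (x := x) (y := b)]
      simpa [dist_eq_norm, norm_sub_rev] using h4
    calc ‖fderiv ℝ D x - fderiv ℝ D a‖ ≤ LD * ‖x - a‖ := h1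
      _ ≤ LD * ‖b - a‖ := mul_le_mul_of_nonneg_left h2 hLD0
  have hfb : f b - f a = D b - D a - fderiv ℝ D a (b - a) := by
    simp only [hf, map_sub]
    abel
  rw [hfb] at key
  calc ‖D b - D a - fderiv ℝ D a (b - a)‖ ≤ (LD * ‖b - a‖) * ‖b - a‖ := key
    _ = LD * ‖b - a‖ ^ 2 := by ring

theorem stmt_11 {N : ℕ}
    (U : Set (EuclideanSpace ℝ (Fin N))) (hU : IsOpen U) (hUconv : Convex ℝ U)
    (D : EuclideanSpace ℝ (Fin N) → EuclideanSpace ℝ (Fin N))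
    (hD : ContDiffOn ℝ 1 D U)
    (LD : ℝ)
    (hLD : ∀ x ∈ U, ∀ y ∈ U, ‖fderiv ℝ D x - fderiv ℝ D y‖ ≤ LD * ‖x - y‖)
    (p q : EuclideanSpace ℝ (Fin N)) (hp : p ∈ U) (hq : q ∈ U)
    (hrefl : (2 : ℝ) • q - p ∈ U) :
    ‖(2 : ℝ)⁻¹ • (D p + D ((2 : ℝ) • q - p)) - D q‖ ≤ LD * ‖p - q‖ ^ 2 := by
  have h1 := taylor_aux U hU hUconv D hD LD hLD q p hq hp
  have h2 := taylor_aux U hU hUconv D hD LD hLD q ((2 : ℝ) • q - p) hq hrefl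
  have hrq : (2 : ℝ) • q - p - q = -(p - q) := by
    rw [two_smul]; abel
  rw [hrq, norm_neg] at h2
  have heq : (2 : ℝ)⁻¹ • (D p + D ((2 : ℝ) • q - p)) - D q
      = (2 : ℝ)⁻¹ • ((D p - D q - fderiv ℝ D q (p - q))
        + (D ((2 : ℝ) • q - p) - D q - fderiv ℝ D q (-(p - q)))) := by
    rw [map_neg]
    module
  rw [heq]
  calc ‖(2 : ℝ)⁻¹ • ((D p - D q - fderiv ℝ D q (p - q))
        + (D ((2 : ℝ) • q - p) - D q - fderiv ℝ D q (-(p - q))))‖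
      ≤ (2 : ℝ)⁻¹ * (LD * ‖p - q‖ ^ 2 + LD * ‖p - q‖ ^ 2) := by
        rw [norm_smul]
        gcongr
        · norm_num
        · exact (norm_add_le _ _).trans (add_le_add h1 h2)
    _ = LD * ‖p - q‖ ^ 2 := by ring
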